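/- Let n ≥ 1, let μ = (-1)^n, and let Δ_n be the n×n complex matrix with (i,j) entry μ^i·(−μ)^{j−1}·C(j−1, n−i) for 1 ≤ i, j ≤ n. Let Δ̃_n be the reflection of Δ_n with respect to its center, i.e. the n×n matrix whose (i,j) entry equals the (n−i+1, n−j+1) entry of Δ_n. Then Δ̃_n · Δ_n = I_n; in particular, Δ_n is invertible and its inverse equals its central reflection. -/

import Mathlib

open Matrix BigOperators Finset

noncomputable section

/-- The `n × n` upper-triangular Jordan block with eigenvalue `μ`:
`μ` on the diagonal, `1` on the first superdiagonal, `0` elsewhere. -/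
def Jmat (n : ℕ) (μ : ℂ) : Matrix (Fin n) (Fin n) ℂ :=
  Matrix.of fun i j => if i = j then μ else if (j : ℕ) = (i : ℕ) + 1 then 1 else 0

/-- The Pascal-type matrix `Δ_n`, whose 1-based `(i,j)` entry is
`μ^i * (−μ)^(j−1) * C(j−1, n−i)` (here indices are 0-based, so shifted by one). -/
def Delta (n : ℕ) (μ : ℂ) : Matrix (Fin n) (Fin n) ℂ :=
  Matrix.of fun i j =>
    μ ^ ((i : ℕ) + 1) * (-μ) ^ (j : ℕ) * ((j : ℕ).choose (n - ((i : ℕ) + 1)) : ℂ)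

/-- The `2n × 2n` block matrix `H_{2n}(μ) = [[0, I],[J_n(μ), 0]]`. -/
def Hmat (n : ℕ) (μ : ℂ) : Matrix (Fin n ⊕ Fin n) (Fin n ⊕ Fin n) ℂ :=
  Matrix.fromBlocks 0 1 (Jmat n μ) 0

/-- The `n × n` reversed identity matrix: `1` on the antidiagonal, `0` elsewhere. -/
def Rev (n : ℕ) : Matrix (Fin n) (Fin n) ℂ :=
  Matrix.of fun i j => if j = i.rev then 1 else 0

lemma key_alt (i j N : ℕ) (hjN : j < N) :
    ∑ m ∈ Finset.range N, (-1:ℂ)^m * (j.choose m : ℂ) * (m.choose i : ℂ)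
      = if i = j then (-1:ℂ)^i else 0 := by
  have hsub : Finset.range (j+1) ⊆ Finset.range N := Finset.range_subset_range.2 hjN
  rw [← Finset.sum_subset hsub (by
    intro m _ hm
    simp only [Finset.mem_range, not_lt] at hm
    rw [Nat.choose_eq_zero_of_lt (by omega)]
    simp)]
  rcases lt_or_ge j i with hij | hij
  · rw [if_neg (by omega)]
    apply Finset.sum_eq_zero
    intro m hm
    simp only [Finset.mem_range] at hm
    rw [Nat.choose_eq_zero_of_lt (show m < i by omega)]
    simp
  · rw [Finset.range_eq_Ico,
      ← Finset.sum_subset (Finset.Ico_subset_Ico (Nat.zero_le i) le_rfl)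
      (by
        intro m hm hm'
        simp only [Finset.mem_Ico] at hm hm'
        rw [Nat.choose_eq_zero_of_lt (show m < i by omega)]
        simp),
      Finset.sum_Ico_eq_sum_range]
    have hterm : ∀ t ∈ Finset.range (j + 1 - i),
        (-1:ℂ)^(i+t) * (j.choose (i+t) : ℂ) * ((i+t).choose i : ℂ)
          = ((-1:ℂ)^i * (j.choose i : ℂ)) * ((-1:ℂ)^t * ((j-i).choose t : ℂ)) := by
      intro t ht
      simp only [Finset.mem_range] at ht
      have h1 : (j.choose (i+t)) * ((i+t).choose i) = j.choose i * (j-i).choose t := by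
        have := Nat.choose_mul (n := j) (k := i + t) (s := i) (by omega)
        simpa using this
      have h1' : ((j.choose (i+t)) : ℂ) * (((i+t).choose i) : ℂ)
          = (j.choose i : ℂ) * ((j-i).choose t : ℂ) := by exact_mod_cast h1
      rw [pow_add]
      linear_combination ((-1:ℂ)^i * (-1)^t) * h1'
    rw [Finset.sum_congr rfl hterm, ← Finset.mul_sum]
    have hji : j + 1 - i = (j - i) + 1 := by omega
    rw [hji]
    have haltC : ∑ t ∈ Finset.range ((j-i)+1), (-1:ℂ)^t * ((j-i).choose t : ℂ)
        = if j - i = 0 then 1 else 0 := by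
      have := Int.alternating_sum_range_choose (n := j - i)
      have := congrArg (Int.cast : ℤ → ℂ) this
      push_cast at this
      simpa using this
    rw [haltC]
    by_cases h : i = j
    · subst h; simp
    · rw [if_neg h, if_neg (by omega)]
      ring

/-- the central reflection of `Δ_n` is a (two-sided) inverse of `Δ_n`. -/
theorem stmt_2 (n : ℕ) (hn : 1 ≤ n) (μ : ℂ) (hμ : μ = (-1) ^ n) :
    (Matrix.of fun i j : Fin n => Delta n μ i.rev j.rev) * Delta n μ = 1 ∧
      IsUnit (Delta n μ) ∧
      (Delta n μ)⁻¹ = Matrix.of fun i j : Fin n => Delta n μ i.rev j.rev := by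
  have h1 : (Matrix.of fun i j : Fin n => Delta n μ i.rev j.rev) * Delta n μ = 1 := by
    have hμ2 : μ * μ = 1 := by
      rw [hμ, ← pow_add]
      exact Even.neg_one_pow ⟨n, rfl⟩
    have hμn : μ ^ n = μ := by
      rw [hμ, ← pow_mul]
      rcases Nat.even_or_odd n with h | h
      · rw [h.neg_one_pow, (h.mul_right n).neg_one_pow]
      · rw [h.neg_one_pow, (h.mul h).neg_one_pow]
    ext i j
    rw [Matrix.mul_apply, ← Equiv.sum_comp (Fin.revPerm (n := n))
      (fun k => (Matrix.of fun i j : Fin n => Delta n μ i.rev j.rev) i k * Delta n μ k j)]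
    have hc : ∀ k : Fin n, n - ((k.rev : ℕ) + 1) = (k : ℕ) := by
      intro k
      rw [Fin.val_rev]
      omega
    have hr : ∀ k : Fin n, ((k.rev : ℕ) + 1) = n - (k : ℕ) := by
      intro k
      rw [Fin.val_rev]
      omega
    have hd : ∀ k : Fin n, n - (n - (k : ℕ)) = (k : ℕ) := by
      intro k
      have := k.isLt
      omega
    simp only [Fin.revPerm_apply, Matrix.of_apply, Delta, Fin.rev_rev, hc, hr, hd]
    have hterm : ∀ m : Fin n,
        μ ^ (n - (i:ℕ)) * (-μ) ^ (m:ℕ) * ((m:ℕ).choose (i:ℕ) : ℂ) *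
          (μ ^ (n - (m:ℕ)) * (-μ) ^ (j:ℕ) * (((j:ℕ)).choose (m:ℕ) : ℂ))
        = (μ ^ (n - (i:ℕ)) * μ * (-μ) ^ (j:ℕ)) *
            ((-1:ℂ)^(m:ℕ) * (((j:ℕ)).choose (m:ℕ) : ℂ) * ((m:ℕ).choose (i:ℕ) : ℂ)) := by
      intro m
      have hmn : (m : ℕ) ≤ n := le_of_lt m.isLt
      have h1 : μ ^ (n - (m:ℕ)) * μ ^ (m:ℕ) = μ := by
        rw [pow_sub_mul_pow μ hmn, hμn]
      rw [neg_pow μ (m:ℕ)]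
      calc μ ^ (n - (i:ℕ)) * ((-1:ℂ)^(m:ℕ) * μ ^ (m:ℕ)) * ((m:ℕ).choose (i:ℕ) : ℂ) *
          (μ ^ (n - (m:ℕ)) * (-μ) ^ (j:ℕ) * (((j:ℕ)).choose (m:ℕ) : ℂ))
          = (μ ^ (n - (m:ℕ)) * μ ^ (m:ℕ)) * (μ ^ (n - (i:ℕ)) * (-μ) ^ (j:ℕ) *
            ((-1:ℂ)^(m:ℕ) * (((j:ℕ)).choose (m:ℕ) : ℂ) * ((m:ℕ).choose (i:ℕ) : ℂ))) := by ring
        _ = _ := by rw [h1]; ring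
    rw [Finset.sum_congr rfl (fun m _ => hterm m), ← Finset.mul_sum]
    rw [Fin.sum_univ_eq_sum_range
      (fun m => (-1:ℂ)^m * (((j:ℕ)).choose m : ℂ) * ((m).choose (i:ℕ) : ℂ)) n]
    rw [key_alt (i:ℕ) (j:ℕ) n j.isLt]
    rcases eq_or_ne i j with h | h
    · subst h
      rw [if_pos rfl, Matrix.one_apply_eq]
      have : (-μ) ^ (i:ℕ) * (-1:ℂ)^(i:ℕ) = μ ^ (i:ℕ) := by
        rw [neg_pow]
        ring_nf
        rw [Even.neg_one_pow ⟨(i:ℕ), by ring⟩]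
        ring
      calc μ ^ (n - (i:ℕ)) * μ * (-μ) ^ (i:ℕ) * (-1:ℂ)^(i:ℕ)
          = μ ^ (n - (i:ℕ)) * μ ^ (i:ℕ) * μ := by rw [mul_assoc _ _ ((-1:ℂ)^(i:ℕ)), this]; ring
        _ = μ * μ := by rw [pow_sub_mul_pow μ (le_of_lt i.isLt), hμn]
        _ = 1 := hμ2
    · rw [if_neg (by exact fun hh => h (Fin.ext hh)), Matrix.one_apply_ne h, mul_zero]
  exact ⟨h1, ⟨⟨Delta n μ, _, (mul_eq_one_comm).mp h1, h1⟩, rfl⟩,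
    Matrix.inv_eq_left_inv h1⟩
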